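/- For every monic quadratic real polynomial f(x) = x² - 2αx + β² with no real roots (i.e., β² > α²) and β > 0, there exists a nonzero polynomial g(x) with nonnegative coefficients such that f(x)·g(x) has nonnegative coefficients. -/
import Mathlib

open Polynomial

lemma quad_nonneg (a b : ℝ) (ha : 0 ≤ a) (hb : 0 ≤ b) :
    ∀ k, 0 ≤ ((X : ℝ[X]) ^ 2 + C a * X + C b).coeff k := by
  intro k
  rcases k with _ | _ | _ | k <;>
    simp [coeff_add, coeff_C, coeff_C_mul, coeff_X, coeff_X_pow, ha, hb]

lemma cubic_nonneg (a b c d : ℝ) (ha : 0 ≤ a) (hb : 0 ≤ b) (hc : 0 ≤ c) (hd : 0 ≤ d) :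
    ∀ k, 0 ≤ (C a + C b * X + C c * X ^ 2 + C d * X ^ 3).coeff k := by
  intro k
  rcases k with _ | _ | _ | _ | k <;>
    simp [coeff_add, coeff_C, coeff_C_mul, coeff_X, coeff_X_pow, ha, hb, hc, hd]

lemma mul_coeff_nonneg (p q : ℝ[X]) (hp : ∀ k, 0 ≤ p.coeff k) (hq : ∀ k, 0 ≤ q.coeff k) :
    ∀ k, 0 ≤ (p * q).coeff k := by
  intro k
  rw [coeff_mul]
  exact Finset.sum_nonneg fun x _ => mul_nonneg (hp _) (hq _)

lemma base_case (α β : ℝ) (hβ : 0 < β) (h2 : 2 * α ≤ β) :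
    ∃ g : Polynomial ℝ, g ≠ 0 ∧ (∀ k, 0 ≤ g.coeff k) ∧
      ∀ k, 0 ≤ ((X ^ 2 - C (2 * α) * X + C (β ^ 2)) * g).coeff k := by
  refine ⟨X + C β, X_add_C_ne_zero β, ?_, ?_⟩
  · intro k
    rcases k with _ | _ | k <;> simp [coeff_add, coeff_C, coeff_X, hβ.le]
  · have hid : (X ^ 2 - C (2 * α) * X + C (β ^ 2)) * (X + C β) =
        C (β ^ 3) + C (β * (β - 2 * α)) * X + C (β - 2 * α) * X ^ 2 + C 1 * X ^ 3 := by
      simp only [C_mul, C_sub, C_add, C_pow, map_ofNat, map_one]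
      ring
    rw [hid]
    exact cubic_nonneg _ _ _ _ (by positivity) (by nlinarith) (by linarith) zero_le_one

lemma key : ∀ n : ℕ, ∀ α β : ℝ, 0 < β → α ^ 2 < β ^ 2 →
    1/2 ≤ (3/2 : ℝ) ^ n * (1 - α / β) →
    ∃ g : Polynomial ℝ, g ≠ 0 ∧ (∀ k, 0 ≤ g.coeff k) ∧
      ∀ k, 0 ≤ ((X ^ 2 - C (2 * α) * X + C (β ^ 2)) * g).coeff k := by
  intro n
  induction n with
  | zero =>
    intro α β hβ hr h
    apply base_case α β hβ
    have : α / β ≤ 1/2 := by nlinarith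
    rw [div_le_iff₀ hβ] at this; linarith
  | succ n ih =>
    intro α β hβ hr h
    by_cases h2 : 2 * α ≤ β
    · exact base_case α β hβ h2
    · push_neg at h2
      have hα : 0 < α := by linarith
      have hαβ : α < β := by nlinarith
      have hβ'pos : (0 : ℝ) < β ^ 2 := by positivity
      have hr' : (2 * α ^ 2 - β ^ 2) ^ 2 < (β ^ 2) ^ 2 := by
        nlinarith [mul_pos (mul_pos hα hα) (sub_pos.mpr hr)]
      have hmeas : 1/2 ≤ (3/2 : ℝ) ^ n * (1 - (2 * α ^ 2 - β ^ 2) / β ^ 2) := by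
        have e1 : 1 - (2 * α ^ 2 - β ^ 2) / β ^ 2 = 2 * (β ^ 2 - α ^ 2) / β ^ 2 := by
          field_simp
          ring
        have e0 : 1 - α / β = (β - α) / β := by field_simp
        have e2 : (3/2 : ℝ) * (1 - α / β) ≤ 1 - (2 * α ^ 2 - β ^ 2) / β ^ 2 := by
          rw [e1, e0, ← mul_div_assoc, div_le_div_iff₀ hβ hβ'pos]
          nlinarith [mul_pos (mul_pos hβ (sub_pos.mpr hαβ)) hα,
            mul_pos (mul_pos hβ hβ) (sub_pos.mpr hαβ)]
        calc (1:ℝ)/2 ≤ (3/2 : ℝ) ^ (n+1) * (1 - α / β) := h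
          _ = (3/2 : ℝ) ^ n * ((3/2) * (1 - α / β)) := by ring
          _ ≤ _ := mul_le_mul_of_nonneg_left e2 (by positivity)
      obtain ⟨g', hg'0, hg'nn, hfg'⟩ := ih (2 * α ^ 2 - β ^ 2) (β ^ 2) hβ'pos hr' hmeas
      have hqnn : ∀ k, 0 ≤ ((X : ℝ[X]) ^ 2 + C (2 * α) * X + C (β ^ 2)).coeff k :=
        quad_nonneg _ _ (by linarith) (by positivity)
      have hexnn : ∀ k, 0 ≤ ((expand ℝ 2) g').coeff k := by
        intro k
        rw [Polynomial.coeff_expand (by norm_num)]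
        split
        · exact hg'nn _
        · exact le_rfl
      refine ⟨(X ^ 2 + C (2 * α) * X + C (β ^ 2)) * expand ℝ 2 g', ?_, ?_, ?_⟩
      · apply mul_ne_zero
        · intro hq
          have h0 := congrArg (eval 0) hq
          simp at h0
          nlinarith
        · rw [Ne, Polynomial.expand_eq_zero (by norm_num)]
          exact hg'0
      · exact mul_coeff_nonneg _ _ hqnn hexnn
      · have hid : (X ^ 2 - C (2 * α) * X + C (β ^ 2)) *
            ((X ^ 2 + C (2 * α) * X + C (β ^ 2)) * expand ℝ 2 g') =
            expand ℝ 2 ((X ^ 2 - C (2 * (2 * α ^ 2 - β ^ 2)) * X + C ((β ^ 2) ^ 2)) * g') := by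
          rw [map_mul (expand ℝ 2)]
          have he : (expand ℝ 2) ((X : ℝ[X]) ^ 2 - C (2 * (2 * α ^ 2 - β ^ 2)) * X + C ((β ^ 2) ^ 2)) =
              X ^ 4 - C (2 * (2 * α ^ 2 - β ^ 2)) * X ^ 2 + C ((β ^ 2) ^ 2) := by
            simp [map_sub, map_add, map_mul, map_pow, expand_X, expand_C]
            ring
          rw [he, ← mul_assoc]
          congr 1
          simp only [C_mul, C_sub, C_add, C_pow, map_ofNat]
          ring
        rw [hid]
        intro k
        rw [Polynomial.coeff_expand (by norm_num)]
        split
        · exact hfg' _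
        · exact le_rfl

theorem stmt4 (α β : ℝ) (hβ : 0 < β) (hroots : α ^ 2 < β ^ 2) :
    ∃ g : Polynomial ℝ, g ≠ 0 ∧ (∀ k, 0 ≤ g.coeff k) ∧
      ∀ k, 0 ≤ ((X ^ 2 - C (2 * α) * X + C (β ^ 2)) * g).coeff k := by
  have hαβ : α < β := by nlinarith
  have hpos : 0 < 1 - α / β := by
    rw [sub_pos, div_lt_one hβ]; exact hαβ
  obtain ⟨n, hn⟩ := pow_unbounded_of_one_lt ((1/2) / (1 - α / β)) (by norm_num : (1:ℝ) < 3/2)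
  refine key n α β hβ hroots ?_
  rw [div_lt_iff₀ hpos] at hn
  linarith
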